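/- For every real number r in (1,2] and every ε > 0 there exists a constant c_{r,ε} > 0 such that for all vectors a, b in ℝ^N satisfying ‖a − b‖ ≥ ε · min(‖a‖, ‖b‖), one has ⟨‖a‖^{r-2} a − ‖b‖^{r-2} b, a − b⟩ ≥ c_{r,ε} ‖a − b‖^r. -/

import Mathlib

open Real

private lemma young_t {t r : ℝ} (ht0 : 0 ≤ t) (hr1 : 1 ≤ r) (hr2 : r ≤ 2) :
    t ^ (r - 1) ≤ (2 - r) + (r - 1) * t := by
  have h := Real.geom_mean_le_arith_mean2_weighted
    (by linarith : (0:ℝ) ≤ r - 1) (by linarith : (0:ℝ) ≤ 2 - r) ht0 zero_le_one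
    (by ring)
  rw [Real.one_rpow] at h
  nlinarith [h]

set_option maxHeartbeats 2000000 in
private lemma key (N : ℕ) {r ε : ℝ} (hr1 : 1 < r) (hr2 : r < 2) (hε : 0 < ε) :
    ∃ c : ℝ, 0 < c ∧ ∀ a b : EuclideanSpace ℝ (Fin N), ‖b‖ ≤ ‖a‖ →
      ‖a - b‖ ≥ ε * ‖b‖ →
      (inner ℝ ((‖a‖ ^ (r - 2)) • a - (‖b‖ ^ (r - 2)) • b) (a - b) : ℝ) ≥ c * ‖a - b‖ ^ r := by
  set c₁ : ℝ := (r - 1) * (1 + 1/ε) ^ (r - 2) / 4 with hc₁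
  set c₂ : ℝ := 3/8 * ε ^ (2 - r) with hc₂
  have hc₁pos : 0 < c₁ := by
    have h1 : (0:ℝ) < (1 + 1/ε) ^ (r - 2) := Real.rpow_pos_of_pos (by positivity) _
    have h2 : (0:ℝ) < r - 1 := by linarith
    positivity
  have hc₂pos : 0 < c₂ := by
    have h1 : (0:ℝ) < ε ^ (2 - r) := Real.rpow_pos_of_pos hε _
    positivity
  refine ⟨min 1 (min c₁ c₂), by positivity, ?_⟩
  intro a b hba hcond
  set M := ‖a‖ with hM
  set m := ‖b‖ with hm
  set d := ‖a - b‖ with hd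
  have hcmin1 : min 1 (min c₁ c₂) ≤ 1 := min_le_left _ _
  have hm0 : 0 ≤ m := norm_nonneg _
  have hd0 : 0 ≤ d := norm_nonneg _
  rcases eq_or_lt_of_le hm0 with hmz | hmpos
  · -- b = 0
    have hb0 : b = 0 := norm_eq_zero.mp hmz.symm
    rcases eq_or_ne a 0 with ha0 | ha0
    · have hdz : d = 0 := by rw [hd, ha0, hb0, sub_zero, norm_zero]
      have hLHS : (inner ℝ ((M ^ (r - 2)) • a - (m ^ (r - 2)) • b) (a - b) : ℝ) = 0 := by
        rw [ha0, hb0]; simp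
      rw [ge_iff_le, hLHS, hdz, Real.zero_rpow (ne_of_gt (by linarith : (0:ℝ) < r)),
        mul_zero]
    · have hM' : (0:ℝ) < M := by rw [hM]; exact norm_pos_iff.mpr ha0
      have hdM : d = M := by rw [hd, hb0, sub_zero]
      have hMr : M ^ (r - 2) * (M * M) = M ^ r := by
        rw [show M ^ r = M ^ ((r-2) + 1 + 1) by ring_nf, Real.rpow_add_one hM'.ne',
          Real.rpow_add_one hM'.ne']
        ring
      have hLHS : (inner ℝ ((M ^ (r - 2)) • a - (m ^ (r - 2)) • b) (a - b) : ℝ) = M ^ r := by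
        rw [hb0, smul_zero, sub_zero, sub_zero, real_inner_smul_left,
          real_inner_self_eq_norm_mul_norm, ← hM, hMr]
      rw [ge_iff_le, hLHS, hdM]
      have hMrpos : (0:ℝ) < M ^ r := Real.rpow_pos_of_pos hM' _
      nlinarith
  · -- m > 0, hence M > 0 and d > 0
    have hMpos : (0:ℝ) < M := lt_of_lt_of_le hmpos hba
    have hdpos : (0:ℝ) < d := lt_of_lt_of_le (by positivity) hcond
    set A := M ^ (r - 2) with hA
    set B := m ^ (r - 2) with hB
    have hApos : 0 < A := Real.rpow_pos_of_pos hMpos _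
    have hBpos : 0 < B := Real.rpow_pos_of_pos hmpos _
    set ip : ℝ := inner ℝ a b with hip
    -- expansion of the inner product
    have expand : (inner ℝ (A • a - B • b) (a - b) : ℝ)
        = A * (M * M) + B * (m * m) - (A + B) * ip := by
      have h1 : (inner ℝ a a : ℝ) = M * M := real_inner_self_eq_norm_mul_norm a
      have h2 : (inner ℝ b b : ℝ) = m * m := real_inner_self_eq_norm_mul_norm b
      have h3 : (inner ℝ b a : ℝ) = ip := by rw [hip, real_inner_comm]
      rw [inner_sub_left, inner_sub_right, inner_sub_right, real_inner_smul_left,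
        real_inner_smul_left, real_inner_smul_left, real_inner_smul_left, h1, h2, h3, ← hip]
      ring
    -- d^2 identity
    have hdsq : d * d = M * M + m * m - 2 * ip := by
      have h := norm_sub_sq_real a b
      rw [← hd, ← hM, ← hm, ← hip] at h
      nlinarith [h]
    have hδ : 0 ≤ M * m - ip := by
      have h := real_inner_le_norm a b
      rw [← hip, ← hM, ← hm] at h; linarith
    set s : ℝ := M - m with hs
    have hs0 : 0 ≤ s := sub_nonneg.mpr hba
    have hsd : s ≤ d := by
      have h := abs_norm_sub_norm_le a b
      rw [← hd, ← hM, ← hm] at h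
      calc s ≤ |M - m| := le_abs_self _
        _ ≤ d := h
    have hmd : m ≤ d / ε := by
      rw [le_div_iff₀ hε]; linarith [hcond]
    have hMr1 : M ^ (r-1) = A * M := by
      rw [show M ^ (r-1) = M ^ ((r-2) + 1) by ring_nf, Real.rpow_add_one hMpos.ne', hA]
    have hmr1 : m ^ (r-1) = B * m := by
      rw [show m ^ (r-1) = m ^ ((r-2) + 1) by ring_nf, Real.rpow_add_one hmpos.ne', hB]
    have decomp : (inner ℝ (A • a - B • b) (a - b) : ℝ)
        = (M ^ (r-1) - m ^ (r-1)) * s + (A + B) * (M * m - ip) := by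
      rw [expand, hMr1, hmr1, hs]; ring
    have hdr : d ^ r = d ^ (r - 2) * (d * d) := by
      rw [show d ^ r = d ^ ((r-2) + 1 + 1) by ring_nf, Real.rpow_add_one hdpos.ne',
        Real.rpow_add_one hdpos.ne']
      ring
    have hid : M * m - ip = (d * d - s * s) / 2 := by
      rw [hs]
      linear_combination (-1/2 : ℝ) * hdsq
    have hMr1ge : m ^ (r-1) ≤ M ^ (r-1) :=
      Real.rpow_le_rpow hm0 hba (by linarith)
    rcases le_or_gt (d/2) s with hcase | hcase
    · -- Case A : s ≥ d/2
      have ht : m / M ≤ 1 := (div_le_one hMpos).mpr hba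
      have hyoung := young_t (t := m/M) (by positivity) hr1.le hr2.le
      have hpow : (m / M) ^ (r-1) = m ^ (r-1) / M ^ (r-1) :=
        Real.div_rpow hm0 (le_of_lt hMpos) (r-1)
      rw [hpow] at hyoung
      have hMr1pos : 0 < M ^ (r-1) := Real.rpow_pos_of_pos hMpos _
      have hkey : (r - 1) * A * s ≤ M ^ (r-1) - m ^ (r-1) := by
        have h1 : m ^ (r-1) ≤ ((2 - r) + (r-1) * (m/M)) * M ^ (r-1) := by
          rw [← div_le_iff₀ hMr1pos]; exact hyoung
        have h2 : ((2 - r) + (r-1) * (m/M)) * M ^ (r-1)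
            = M ^ (r-1) - (r-1) * A * s := by
          rw [hMr1, hs]
          field_simp
          ring
        rw [h2] at h1; linarith
      have hMle : M ≤ d * (1 + 1/ε) := by
        have h1 : d * (1 + 1/ε) = d + d / ε := by field_simp
        have h2 : M = m + s := by rw [hs]; ring
        rw [h1, h2]; linarith [hmd, hsd]
      have hAge : d ^ (r-2) * (1 + 1/ε) ^ (r-2) ≤ A := by
        have h1 : (d * (1 + 1/ε)) ^ (r-2) ≤ A :=
          Real.rpow_le_rpow_of_nonpos hMpos hMle (by linarith)
        rwa [Real.mul_rpow hd0 (by positivity)] at h1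
      have hterm1 : (r-1) * A * (s * s) ≤ (M ^ (r-1) - m ^ (r-1)) * s := by
        have h := mul_le_mul_of_nonneg_right hkey hs0
        calc (r-1) * A * (s * s) = (r-1) * A * s * s := by ring
          _ ≤ (M ^ (r-1) - m ^ (r-1)) * s := h
      have t1 : (r-1) * (d ^ (r-2) * (1 + 1/ε) ^ (r-2)) ≤ (r-1) * A :=
        mul_le_mul_of_nonneg_left hAge (by linarith)
      have t2 : d/2 * (d/2) ≤ s * s := mul_self_le_mul_self (by positivity) hcase
      have hA1 : (r-1) * (d ^ (r-2) * (1 + 1/ε) ^ (r-2)) * (d/2 * (d/2))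
          ≤ (r-1) * A * (s * s) :=
        mul_le_mul t1 t2 (by positivity) (le_of_lt (mul_pos (by linarith) hApos))
      have hfin : min 1 (min c₁ c₂) * d ^ r ≤ c₁ * d ^ r :=
        mul_le_mul_of_nonneg_right (le_trans (min_le_right _ _) (min_le_left _ _))
          (Real.rpow_nonneg hd0 r)
      have hc₁eq : c₁ * d ^ r = (r-1) * (d ^ (r-2) * (1 + 1/ε) ^ (r-2)) * (d/2 * (d/2)) := by
        rw [hc₁, hdr]; ring
      rw [ge_iff_le, decomp]
      calc min 1 (min c₁ c₂) * d ^ r ≤ c₁ * d ^ r := hfin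
        _ = (r-1) * (d ^ (r-2) * (1 + 1/ε) ^ (r-2)) * (d/2 * (d/2)) := hc₁eq
        _ ≤ (r-1) * A * (s * s) := hA1
        _ ≤ (M ^ (r-1) - m ^ (r-1)) * s := hterm1
        _ ≤ (M ^ (r-1) - m ^ (r-1)) * s + (A + B) * (M * m - ip) :=
            le_add_of_nonneg_right (mul_nonneg (add_pos hApos hBpos).le hδ)
    · -- Case B : s < d/2
      have hss : s * s ≤ d/2 * (d/2) := mul_self_le_mul_self hs0 hcase.le
      have hδbig : 3/8 * (d * d) ≤ M * m - ip := by
        rw [hid]; nlinarith [hss]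
      have hBge : d ^ (r-2) * ε ^ (2-r) ≤ B := by
        have h1 : (d / ε) ^ (r-2) ≤ B :=
          Real.rpow_le_rpow_of_nonpos hmpos hmd (by linarith)
        have h2 : (d / ε) ^ (r-2) = d ^ (r-2) * ε ^ (2-r) := by
          rw [Real.div_rpow hd0 hε.le, div_eq_mul_inv, ← Real.rpow_neg hε.le]
          ring_nf
        rwa [h2] at h1
      have hterm1 : 0 ≤ (M ^ (r-1) - m ^ (r-1)) * s :=
        mul_nonneg (by linarith [hMr1ge]) hs0
      have hBterm : B * (3/8 * (d*d)) ≤ (A + B) * (M * m - ip) := by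
        have h1 := mul_le_mul_of_nonneg_left hδbig hBpos.le
        have h2 := mul_nonneg hApos.le hδ
        calc B * (3/8 * (d*d)) ≤ B * (M * m - ip) := h1
          _ ≤ A * (M * m - ip) + B * (M * m - ip) := by linarith
          _ = (A + B) * (M * m - ip) := by ring
      have hfin : min 1 (min c₁ c₂) * d ^ r ≤ c₂ * d ^ r :=
        mul_le_mul_of_nonneg_right (le_trans (min_le_right _ _) (min_le_right _ _))
          (Real.rpow_nonneg hd0 r)
      have hc₂eq : c₂ * d ^ r = (d ^ (r-2) * ε ^ (2-r)) * (3/8 * (d*d)) := by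
        rw [hc₂, hdr]; ring
      rw [ge_iff_le, decomp]
      calc min 1 (min c₁ c₂) * d ^ r ≤ c₂ * d ^ r := hfin
        _ = (d ^ (r-2) * ε ^ (2-r)) * (3/8 * (d*d)) := hc₂eq
        _ ≤ B * (3/8 * (d*d)) :=
            mul_le_mul_of_nonneg_right hBge (by positivity)
        _ ≤ (A + B) * (M * m - ip) := hBterm
        _ ≤ (M ^ (r-1) - m ^ (r-1)) * s + (A + B) * (M * m - ip) := by linarith

/-- For every real number `r ∈ (1,2]` and every `ε > 0` there exists a constant `c_{r,ε} > 0`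
such that for all vectors `a, b ∈ ℝ^N` with `‖a − b‖ ≥ ε · min ‖a‖ ‖b‖`, one has
`⟪‖a‖^(r-2) • a − ‖b‖^(r-2) • b, a − b⟫ ≥ c_{r,ε} ‖a − b‖^r`. -/
theorem stmt_3 (N : ℕ) (hN : 1 ≤ N) (r : ℝ) (hr : r ∈ Set.Ioc (1 : ℝ) 2)
    (ε : ℝ) (hε : 0 < ε) :
    ∃ c : ℝ, 0 < c ∧ ∀ a b : EuclideanSpace ℝ (Fin N),
      ‖a - b‖ ≥ ε * min ‖a‖ ‖b‖ →
      (inner ℝ ((‖a‖ ^ (r - 2)) • a - (‖b‖ ^ (r - 2)) • b) (a - b) : ℝ) ≥ c * ‖a - b‖ ^ r := by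
  obtain ⟨hr1, hr2⟩ := hr
  rcases eq_or_lt_of_le hr2 with hr2e | hr2s
  · -- r = 2
    refine ⟨1, one_pos, ?_⟩
    intro a b _
    subst hr2e
    simp only [sub_self, Real.rpow_zero, one_smul, one_mul, ge_iff_le]
    rw [real_inner_self_eq_norm_mul_norm]
    have h2 : ‖a - b‖ ^ (2:ℝ) = ‖a - b‖ * ‖a - b‖ := by
      rw [show (2:ℝ) = ((2:ℕ):ℝ) by norm_num, Real.rpow_natCast]; ring
    rw [h2]
  · obtain ⟨c, hc, hkey⟩ := key N hr1 hr2s hε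
    refine ⟨c, hc, ?_⟩
    intro a b hcond
    rcases le_total ‖b‖ ‖a‖ with hba | hab
    · exact hkey a b hba (by rwa [min_eq_right hba] at hcond)
    · have h := hkey b a hab (by
        rw [norm_sub_rev b a]
        rwa [min_eq_left hab] at hcond)
      have e1 : (‖a‖ ^ (r - 2)) • a - (‖b‖ ^ (r - 2)) • b
          = -((‖b‖ ^ (r - 2)) • b - (‖a‖ ^ (r - 2)) • a) := (neg_sub _ _).symm
      have e2 : a - b = -(b - a) := (neg_sub _ _).symm
      rw [e1, e2, inner_neg_neg, norm_neg]
      exact h
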